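/- For n = 3 the quantum upper bound is attained: the maximum over unit vectors v₁, v₂, v₃ ∈ ℝ³ and encodings r : {0,1}³ → ℝ³ with ‖r x‖ ≤ 1 of the average success probability (1/(2³·3)) · Σ_{x ∈ {0,1}³} Σ_{i < 3} (1 + (−1)^{x i} · ⟨v i, r x⟩)/2 equals 1/2 + 1/(2√3), and it is attained by the standard orthonormal basis vectors v₁ = (1,0,0), v₂ = (0,1,0), v₃ = (0,0,1) with r x = ((−1)^{x₁}, (−1)^{x₂}, (−1)^{x₃})/√3. -/

import Mathlib

open scoped RealInnerProductSpace
open Finset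

/-- The average success probability, in the Bloch-vector formulation, of the pure
`n ↦ 1` quantum random access code with measurement vectors `v` and encoding `r`. -/
noncomputable def avgProb (n : ℕ) (v : Fin n → EuclideanSpace ℝ (Fin 3))
    (r : (Fin n → Bool) → EuclideanSpace ℝ (Fin 3)) : ℝ :=
  (1 / ((2 : ℝ) ^ n * n)) *
    ∑ x : Fin n → Bool, ∑ i : Fin n,
      (1 + (if x i then (-1 : ℝ) else 1) * ⟪v i, r x⟫) / 2

private def qeps {n : ℕ} (x : Fin n → Bool) (i : Fin n) : ℝ := if x i then -1 else 1

private lemma qeps_mul_self {n : ℕ} (x : Fin n → Bool) (i : Fin n) :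
    qeps x i * qeps x i = 1 := by
  unfold qeps; cases x i <;> norm_num

private lemma sum_qeps_mul {n : ℕ} {i j : Fin n} (hij : i ≠ j) :
    ∑ x : Fin n → Bool, qeps x i * qeps x j = 0 := by
  classical
  refine Finset.sum_involution (fun a _ => Function.update a j (!a j)) ?_ ?_
    (fun a ha => Finset.mem_univ _) ?_
  · intro a _
    have h1 : qeps (Function.update a j (!a j)) i = qeps a i := by
      unfold qeps; rw [Function.update_of_ne hij]
    have h2 : qeps (Function.update a j (!a j)) j = -qeps a j := by
      unfold qeps; rw [Function.update_self]; cases a j <;> norm_num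
    rw [h1, h2]; ring
  · intro a _ _ h
    have := congrFun h j
    simp only [Function.update_self] at this
    cases a j <;> simp_all
  · intro a _
    funext k
    by_cases hk : k = j
    · subst hk; simp
    · simp [Function.update_of_ne hk]

private lemma sum_norm_sq_signs {n : ℕ} (v : Fin n → EuclideanSpace ℝ (Fin 3))
    (hv : ∀ i, ‖v i‖ = 1) :
    ∑ x : Fin n → Bool, ‖∑ i, qeps x i • v i‖ ^ 2 = 2 ^ n * n := by
  classical
  have hexp : ∀ x : Fin n → Bool, ‖∑ i, qeps x i • v i‖ ^ 2
      = ∑ i, ∑ j, qeps x i * qeps x j * ⟪v i, v j⟫ := by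
    intro x
    rw [← real_inner_self_eq_norm_sq, sum_inner]
    refine Finset.sum_congr rfl fun i _ => ?_
    rw [real_inner_smul_left, inner_sum, Finset.mul_sum]
    refine Finset.sum_congr rfl fun j _ => ?_
    rw [real_inner_smul_right]; ring
  simp only [hexp]
  rw [Finset.sum_comm]
  have : ∀ i : Fin n, ∑ x : Fin n → Bool, ∑ j, qeps x i * qeps x j * ⟪v i, v j⟫
      = 2 ^ n := by
    intro i
    rw [Finset.sum_comm]
    rw [Finset.sum_eq_single i]
    · have : ∀ x : Fin n → Bool, qeps x i * qeps x i * ⟪v i, v i⟫ = 1 := by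
        intro x
        rw [qeps_mul_self, real_inner_self_eq_norm_sq, hv i]; norm_num
      simp only [this, Finset.sum_const, Finset.card_univ]
      simp [Fintype.card_fun]
    · intro j _ hj
      have : ∑ x : Fin n → Bool, qeps x i * qeps x j * ⟪v i, v j⟫
          = (∑ x : Fin n → Bool, qeps x i * qeps x j) * ⟪v i, v j⟫ := by
        rw [Finset.sum_mul]
      rw [this, sum_qeps_mul (Ne.symm hj), zero_mul]
    · simp
  simp only [this, Finset.sum_const, Finset.card_univ, Fintype.card_fin]
  ring

private lemma avgProb_expand (v : Fin 3 → EuclideanSpace ℝ (Fin 3))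
    (r : (Fin 3 → Bool) → EuclideanSpace ℝ (Fin 3)) :
    avgProb 3 v r = 1 / 2 + (1 / 48) * ∑ x : Fin 3 → Bool, ⟪∑ i, qeps x i • v i, r x⟫ := by
  unfold avgProb
  have hs : ∀ x : Fin 3 → Bool, ⟪∑ i, qeps x i • v i, r x⟫
      = ∑ i : Fin 3, qeps x i * ⟪v i, r x⟫ := by
    intro x
    rw [sum_inner]
    exact Finset.sum_congr rfl fun i _ => real_inner_smul_left _ _ _
  simp only [hs]
  have hbody : ∀ x : Fin 3 → Bool,
      ∑ i : Fin 3, (1 + (if x i then (-1 : ℝ) else 1) * ⟪v i, r x⟫) / 2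
      = 3 / 2 + (1 / 2) * ∑ i : Fin 3, qeps x i * ⟪v i, r x⟫ := by
    intro x
    unfold qeps
    rw [Fin.sum_univ_three, Fin.sum_univ_three]
    ring
  simp only [hbody]
  have hcard : Fintype.card (Fin 3 → Bool) = 8 := by simp [Fintype.card_fun]
  rw [Finset.sum_add_distrib, Finset.sum_const, ← Finset.mul_sum, Finset.card_univ, hcard]
  simp only [nsmul_eq_mul]
  push_cast
  ring

/-- For `n = 3` the quantum upper bound `1/2 + 1/(2√3)` is the maximum of the average
success probability, and it is attained by the standard basis vectors with
`r x = ((−1)^{x₁}, (−1)^{x₂}, (−1)^{x₃})/√3`. -/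
theorem stmt14 :
    IsGreatest
      {p : ℝ | ∃ (v : Fin 3 → EuclideanSpace ℝ (Fin 3))
        (r : (Fin 3 → Bool) → EuclideanSpace ℝ (Fin 3)),
        (∀ i, ‖v i‖ = 1) ∧ (∀ x, ‖r x‖ ≤ 1) ∧ p = avgProb 3 v r}
      (1 / 2 + 1 / (2 * Real.sqrt 3)) ∧
    avgProb 3
      ![EuclideanSpace.single 0 1, EuclideanSpace.single 1 1, EuclideanSpace.single 2 1]
      (fun x => (WithLp.equiv 2 (Fin 3 → ℝ)).symm
        ![(if x 0 then (-1 : ℝ) else 1) / Real.sqrt 3,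
          (if x 1 then (-1 : ℝ) else 1) / Real.sqrt 3,
          (if x 2 then (-1 : ℝ) else 1) / Real.sqrt 3])
      = 1 / 2 + 1 / (2 * Real.sqrt 3) := by
  have s3 : Real.sqrt 3 > 0 := Real.sqrt_pos.mpr (by norm_num)
  have s3sq : Real.sqrt 3 * Real.sqrt 3 = 3 := Real.mul_self_sqrt (by norm_num)
  -- the explicit example
  set v₀ : Fin 3 → EuclideanSpace ℝ (Fin 3) :=
    ![EuclideanSpace.single 0 1, EuclideanSpace.single 1 1, EuclideanSpace.single 2 1] with hv₀
  set r₀ : (Fin 3 → Bool) → EuclideanSpace ℝ (Fin 3) :=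
    (fun x => (WithLp.equiv 2 (Fin 3 → ℝ)).symm
        ![(if x 0 then (-1 : ℝ) else 1) / Real.sqrt 3,
          (if x 1 then (-1 : ℝ) else 1) / Real.sqrt 3,
          (if x 2 then (-1 : ℝ) else 1) / Real.sqrt 3]) with hr₀
  have hvnorm : ∀ i, ‖v₀ i‖ = 1 := by
    intro i
    fin_cases i <;> simp [hv₀, EuclideanSpace.norm_single]
  have hbool : ∀ b : Bool, ‖(if b then (-1 : ℝ) else 1) / Real.sqrt 3‖ ^ 2 = 1 / 3 := by
    intro b
    cases b <;>
      · simp only [if_true, if_false, Real.norm_eq_abs]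
        rw [abs_div]
        rw [div_pow]
        simp [abs_of_pos s3, s3sq]
        try norm_num [s3sq]
  have hrnorm : ∀ x, ‖r₀ x‖ = 1 := by
    intro x
    rw [hr₀, EuclideanSpace.norm_eq]
    have : ∀ i : Fin 3, ‖((WithLp.equiv 2 (Fin 3 → ℝ)).symm
        ![(if x 0 then (-1 : ℝ) else 1) / Real.sqrt 3,
          (if x 1 then (-1 : ℝ) else 1) / Real.sqrt 3,
          (if x 2 then (-1 : ℝ) else 1) / Real.sqrt 3]) i‖ ^ 2 = 1 / 3 := by
      intro i
      rw [WithLp.equiv_symm_apply, PiLp.toLp_apply]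
      fin_cases i <;> simp only [Matrix.cons_val_zero, Matrix.cons_val_one, Matrix.head_cons,
        Matrix.cons_val_two, Matrix.tail_cons] <;> exact hbool _
    rw [Fin.sum_univ_three, this 0, this 1, this 2]
    norm_num
  have hval : avgProb 3 v₀ r₀ = 1 / 2 + 1 / (2 * Real.sqrt 3) := by
    unfold avgProb
    have hterm : ∀ (x : Fin 3 → Bool) (i : Fin 3),
        (1 + (if x i then (-1 : ℝ) else 1) * ⟪v₀ i, r₀ x⟫) / 2
        = (1 + 1 / Real.sqrt 3) / 2 := by
      intro x i
      have hinner : ⟪v₀ i, r₀ x⟫ = (if x i then (-1 : ℝ) else 1) / Real.sqrt 3 := by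
        fin_cases i <;>
          simp [hv₀, hr₀, EuclideanSpace.inner_single_left, WithLp.equiv_symm_apply, PiLp.toLp_apply]
      rw [hinner]
      cases x i <;> ring_nf <;> norm_num
    simp only [hterm]
    rw [Finset.sum_const, Finset.sum_const, Finset.card_univ, Finset.card_univ]
    have hcard : Fintype.card (Fin 3 → Bool) = 8 := by simp [Fintype.card_fun]
    rw [hcard]
    simp only [Fintype.card_fin, nsmul_eq_mul]
    have : (1 : ℝ) / (2 * Real.sqrt 3) = (1 / Real.sqrt 3) / 2 := by ring
    rw [this]
    push_cast
    ring
  refine ⟨⟨⟨v₀, r₀, hvnorm, fun x => le_of_eq (hrnorm x), hval.symm⟩, ?_⟩, hval⟩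
  -- upper bound
  rintro p ⟨v, r, hv, hr, rfl⟩
  rw [avgProb_expand]
  have key : ∑ x : Fin 3 → Bool, ⟪∑ i, qeps x i • v i, r x⟫ ≤ 8 * Real.sqrt 3 := by
    have h1 : ∑ x : Fin 3 → Bool, ⟪∑ i, qeps x i • v i, r x⟫
        ≤ ∑ x : Fin 3 → Bool, ‖∑ i, qeps x i • v i‖ := by
      refine Finset.sum_le_sum fun x _ => ?_
      calc ⟪∑ i, qeps x i • v i, r x⟫ ≤ ‖∑ i, qeps x i • v i‖ * ‖r x‖ :=
            real_inner_le_norm _ _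
        _ ≤ ‖∑ i, qeps x i • v i‖ * 1 :=
            mul_le_mul_of_nonneg_left (hr x) (norm_nonneg _)
        _ = ‖∑ i, qeps x i • v i‖ := mul_one _
    have h2 : (∑ x : Fin 3 → Bool, ‖∑ i, qeps x i • v i‖) ^ 2
        ≤ 8 * (2 ^ 3 * 3) := by
      have hcs := Finset.sum_mul_sq_le_sq_mul_sq Finset.univ (fun _ => (1 : ℝ))
        (fun x : Fin 3 → Bool => ‖∑ i, qeps x i • v i‖)
      simp only [one_mul, one_pow] at hcs
      have hsq := sum_norm_sq_signs v hv
      rw [hsq] at hcs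
      have hcard : ∑ _x : Fin 3 → Bool, (1 : ℝ) = 8 := by
        rw [Finset.sum_const, Finset.card_univ]
        simp [Fintype.card_fun]
      rw [hcard] at hcs
      exact_mod_cast hcs
    have h3 : ∑ x : Fin 3 → Bool, ‖∑ i, qeps x i • v i‖ ≤ 8 * Real.sqrt 3 := by
      have hnn : (0 : ℝ) ≤ ∑ x : Fin 3 → Bool, ‖∑ i, qeps x i • v i‖ :=
        Finset.sum_nonneg fun x _ => norm_nonneg _
      nlinarith [s3sq, s3]
    linarith
  have : (1 : ℝ) / 48 * (8 * Real.sqrt 3) = 1 / (2 * Real.sqrt 3) := by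
    rw [eq_div_iff (by positivity : (2 * Real.sqrt 3) ≠ 0)]
    nlinarith [s3sq]
  nlinarith [key, s3]
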